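/- Let X be a connected and locally connected T₁ topological space, let x ∈ X, and let C be a connected component of X ∖ {x}. Then the closure of C in X equals C ∪ {x}. -/
import Mathlib


open Set Topology

/-- Let `X` be a connected and locally connected T₁ topological space,
let `x ∈ X`, and let `C` be a connected component of `X ∖ {x}` (the component of a point
`y ∈ X ∖ {x}`). Then the closure of `C` in `X` equals `C ∪ {x}`. -/
theorem closure_connectedComponentIn_compl_singleton
    {X : Type*} [TopologicalSpace X] [ConnectedSpace X] [LocallyConnectedSpace X] [T1Space X]
    (x y : X) (hy : y ∈ ({x}ᶜ : Set X)) :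
    closure (connectedComponentIn ({x}ᶜ : Set X) y) =
      connectedComponentIn ({x}ᶜ : Set X) y ∪ {x} := by
  set C := connectedComponentIn ({x}ᶜ : Set X) y with hC
  have hCsub : C ⊆ ({x}ᶜ : Set X) := connectedComponentIn_subset _ _
  have hCopen : IsOpen C := isOpen_compl_singleton.connectedComponentIn
  have hconn : IsPreconnected C := isPreconnected_connectedComponentIn
  have hyC : y ∈ C := mem_connectedComponentIn hy
  have hsub : closure C ⊆ C ∪ {x} := by
    intro z hz
    by_cases hzx : z = x
    · exact Or.inr hzx
    · left
      have hS : IsPreconnected (insert z C) :=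
        hconn.subset_closure (subset_insert _ _)
          (insert_subset hz subset_closure)
      have hS2 : insert z C ⊆ ({x}ᶜ : Set X) :=
        insert_subset hzx hCsub
      exact hS.subset_connectedComponentIn (mem_insert_iff.2 (Or.inr hyC)) hS2
        (mem_insert _ _)
  apply Subset.antisymm hsub
  apply union_subset subset_closure
  intro z hz
  rw [mem_singleton_iff] at hz
  subst hz
  by_contra hx
  have hclosed : IsClosed C := by
    apply isClosed_of_closure_subset
    intro w hw
    rcases hsub hw with h | h
    · exact h
    · exact absurd (h ▸ hw) hx
  have : C = univ := IsClopen.eq_univ ⟨hclosed, hCopen⟩ ⟨y, hyC⟩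
  exact hCsub (this ▸ mem_univ z) rfl
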